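/- Let Y × Ȳ = X = Z × Z̄ be two direct product decompositions of a metric space X. Fix a point x ∈ X and set F_x = Y_x ∩ Z_x. Then for each point p ∈ Ȳ_x and each point q ∈ F_x we have d²(P^Z(p), P^Z(q)) = d²(P^Z(p), P^Z(x)) + d²(P^Z(x), P^Z(q)). -/
import Mathlib

universe u

/-- A metric space bundled with its metric structure. -/
structure BundledMetricSpace : Type (u + 1) where
  carrier : Type u
  [str : MetricSpace carrier]

attribute [instance] BundledMetricSpace.str

/-- A real normed vector space bundled with its structure. -/
structure BundledNormedSpace : Type (u + 1) where
  carrier : Type u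
  [grp : NormedAddCommGroup carrier]
  [mod : NormedSpace ℝ carrier]

attribute [instance] BundledNormedSpace.grp BundledNormedSpace.mod

/-- `(pY, pZ)` realize `X` as the direct (ℓ²-) product of the metric spaces `Y` and `Z`:
the joint map is a surjection (hence, by the distance identity, an isometry onto
the product with the metric `d((y,z),(y',z')) = sqrt (d(y,y')² + d(z,z')²)`). -/
def IsProdDecomp {X Y Z : Type*} [MetricSpace X] [MetricSpace Y] [MetricSpace Z]
    (pY : X → Y) (pZ : X → Z) : Prop :=
  Function.Surjective (fun x => (pY x, pZ x)) ∧
    ∀ x x' : X, dist x x' ^ 2 = dist (pY x) (pY x') ^ 2 + dist (pZ x) (pZ x') ^ 2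

/-- Given the projection `pZ : X → Z` onto the complementary factor of a product
decomposition, `fiberThrough pZ x` is the fiber through `x` of the other factor,
i.e. `pZ⁻¹(pZ x)`. -/
def fiberThrough {X Z : Type*} (pZ : X → Z) (x : X) : Set X :=
  {x' : X | pZ x' = pZ x}

/-- A metric space is geodesic if any two points are joined by an isometrically
embedded interval. -/
def IsGeodesicSpace (X : Type*) [MetricSpace X] : Prop :=
  ∀ x y : X, ∃ γ : ℝ → X, γ 0 = x ∧ γ (dist x y) = y ∧
    ∀ s ∈ Set.Icc (0 : ℝ) (dist x y), ∀ t ∈ Set.Icc (0 : ℝ) (dist x y),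
      dist (γ s) (γ t) = |s - t|

/-- The affine rank of a metric space: the supremum of the topological dimensions
(= dimensions of the affine hulls) of affine spaces (= linearly convex subsets of
normed real vector spaces) admitting an isometric embedding into `X`. -/
noncomputable def affRank (X : Type*) [MetricSpace X] : ℕ∞ :=
  sSup {n : ℕ∞ | ∃ (V : BundledNormedSpace.{0}) (C : Set V.carrier) (f : C → X),
    FiniteDimensional ℝ V.carrier ∧ Convex ℝ C ∧ Isometry f ∧
    n = (Module.finrank ℝ (vectorSpan ℝ C) : ℕ∞)}

/-- A metric space is affine if it is isometric to a linearly convex subset of a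
real normed vector space. -/
def IsAffineMetricSpace (T : Type u) [MetricSpace T] : Prop :=
  ∃ (V : BundledNormedSpace.{u}) (C : Set V.carrier),
    Convex ℝ C ∧ Nonempty (T ≃ᵢ ↥C)

/-- A metric space is a finite-dimensional affine metric space if it is isometric to a
linearly convex subset of a finite-dimensional real normed vector space. -/
def IsFinDimAffine (T : Type*) [MetricSpace T] : Prop :=
  ∃ (V : BundledNormedSpace.{0}) (C : Set V.carrier),
    FiniteDimensional ℝ V.carrier ∧ Convex ℝ C ∧ Nonempty (T ≃ᵢ ↥C)

/-- A metric space is irreducible if in every direct product decomposition one of the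
factors is a single point (i.e. has at most one point). -/
def IrreducibleMS (Z : Type u) [MetricSpace Z] : Prop :=
  ∀ (W W' : Type u) [MetricSpace W] [MetricSpace W'] (q : Z → W) (q' : Z → W'),
    IsProdDecomp q q' → Subsingleton W ∨ Subsingleton W'

/-- `p` realizes `X` as the direct (ℓ²-) product of the finite family of metric
spaces `Y i`. -/
def IsMultiDecomp {X : Type u} [MetricSpace X] {n : ℕ} (Y : Fin n → BundledMetricSpace.{u})
    (p : ∀ i, X → (Y i).carrier) : Prop :=
  Function.Surjective (fun x => fun i => p i x) ∧
    ∀ x x' : X, dist x x' ^ 2 = ∑ i, dist (p i x) (p i x') ^ 2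

/-- The `Y i`-fiber through `x` of a multiple product decomposition: the set of points
having the same projections as `x` to all the other factors. -/
def mfiber {X : Type u} {n : ℕ} {Y : Fin n → BundledMetricSpace.{u}}
    (p : ∀ i, X → (Y i).carrier) (i : Fin n) (x : X) : Set X :=
  {x' : X | ∀ j, j ≠ i → p j x' = p j x}

/-- A decomposition `X = Y₀ × Y₁ × ⋯ × Yₙ` as in the de Rham decomposition theorem:
`Y₀` is a Euclidean space `ℝ^m` (possibly a point) and each `Y i`, `i ≥ 1`, is an
irreducible metric space with more than one point, not isometric to the real line. -/
def IsDeRhamDecomp {X : Type u} [MetricSpace X] {n : ℕ} (m : ℕ)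
    (Y : Fin (n + 1) → BundledMetricSpace.{u}) (p : ∀ i, X → (Y i).carrier) : Prop :=
  IsMultiDecomp Y p ∧ Nonempty ((Y 0).carrier ≃ᵢ EuclideanSpace ℝ (Fin m)) ∧
    ∀ i, i ≠ 0 → IrreducibleMS (Y i).carrier ∧ Nontrivial (Y i).carrier ∧
      IsEmpty ((Y i).carrier ≃ᵢ ℝ)

/-- **Lemma 2.1**: let `Y × Ȳ = X = Z × Z̄` be two direct product decompositions of a
metric space `X`, let `x ∈ X` and `F_x = Y_x ∩ Z_x`. Then for each `p ∈ Ȳ_x` and each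
`q ∈ F_x` one has `d²(P^Z p, P^Z q) = d²(P^Z p, P^Z x) + d²(P^Z x, P^Z q)`. -/
theorem dist_sq_proj_fiber_intersection {X Y Ybar Z Zbar : Type u}
    [MetricSpace X] [MetricSpace Y] [MetricSpace Ybar] [MetricSpace Z] [MetricSpace Zbar]
    (pY : X → Y) (pYbar : X → Ybar) (pZ : X → Z) (pZbar : X → Zbar)
    (hYY : IsProdDecomp pY pYbar) (hZZ : IsProdDecomp pZ pZbar) (x : X)
    (p : X) (hp : p ∈ fiberThrough pY x)
    (q : X) (hq : q ∈ fiberThrough pYbar x ∩ fiberThrough pZbar x) :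
    dist (pZ p) (pZ q) ^ 2 = dist (pZ p) (pZ x) ^ 2 + dist (pZ x) (pZ q) ^ 2 := by
  obtain ⟨hq1, hq2⟩ := hq
  simp only [fiberThrough, Set.mem_setOf_eq] at hp hq1 hq2
  have e1 := hYY.2 p q
  have e2 := hYY.2 p x
  have e3 := hYY.2 x q
  have f1 := hZZ.2 p q
  have f2 := hZZ.2 p x
  have f3 := hZZ.2 x q
  rw [hp] at e1 e2
  rw [hq1] at e1 e3
  rw [hq2] at f1 f3
  simp only [dist_self] at e2 e3 f3
  linarith
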